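/- Let Q be a nonempty dense linear order without endpoints and let a_1 > a_2 > ⋯ > a_m be a strictly decreasing tuple in Q. Let x ∈ Q^n and y ∈ Q^n, and let A₁ = {z ∈ Q^n : z has the same order type over a as x} and A₂ = {z ∈ Q^n : z has the same order type over a as y}. If for each of the m+1 gaps determined by a the number of distinct coordinate values of x lying in that gap equals the number of distinct coordinate values of y lying in that gap, then there is a definable bijection from A₁ onto A₂. -/

import Mathlib

open FirstOrder FirstOrder.Language

attribute [local instance] FirstOrder.Language.orderStructure

/-- A subset of `Q^n` is definable if it is defined by a first-order formula in the
language of orders with finitely many parameters from `Q`. -/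
def DLODefinable {Q : Type*} [LinearOrder Q] {n : ℕ} (s : Set (Fin n → Q)) : Prop :=
  ∃ A : Set Q, A.Finite ∧ A.Definable Language.order s

/-- The graph of `f` restricted to `D₁`, as a subset of `Q^(n+m)`. -/
def graphOn {Q : Type*} {n m : ℕ} (D₁ : Set (Fin n → Q))
    (f : (Fin n → Q) → (Fin m → Q)) : Set (Fin (n + m) → Q) :=
  {z | ∃ x ∈ D₁, z = Fin.append x (f x)}

/-- A definable bijection from `D₁ ⊆ Q^n` onto `D₂ ⊆ Q^m`: a bijection from `D₁` onto `D₂`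
whose graph is a definable subset of `Q^(n+m)`. -/
def DefBij {Q : Type*} [LinearOrder Q] {n m : ℕ} (D₁ : Set (Fin n → Q))
    (D₂ : Set (Fin m → Q)) : Prop :=
  ∃ f : (Fin n → Q) → (Fin m → Q), Set.BijOn f D₁ D₂ ∧ DLODefinable (graphOn D₁ f)

/-- `x, y ∈ Q^n` have the same order type over the tuple `a`. -/
def SameOrderType {Q : Type*} [LinearOrder Q] {m n : ℕ} (a : Fin m → Q)
    (x y : Fin n → Q) : Prop :=
  (∀ i j, x i < x j ↔ y i < y j) ∧
    ∀ i k, (x i < a k ↔ y i < a k) ∧ (a k < x i ↔ a k < y i)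

/-- Membership in the `g`-th gap determined by the strictly decreasing tuple `a`:
`G_0 = (a 0, ∞)`, `G_g = (a g, a (g-1))` for `0 < g < m`, and `G_m = (-∞, a (m-1))`. -/
def InGap {Q : Type*} [LinearOrder Q] {m : ℕ} (a : Fin m → Q) (g : Fin (m + 1)) (q : Q) :
    Prop :=
  (∀ h : (g : ℕ) < m, a ⟨g, h⟩ < q) ∧ ∀ j : Fin m, (j : ℕ) + 1 = (g : ℕ) → q < a j

/-- The number of distinct values among the coordinates of `x` lying in the `g`-th gap. -/
noncomputable def gapCount {Q : Type*} [LinearOrder Q] {m n : ℕ} (a : Fin m → Q)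
    (x : Fin n → Q) (g : Fin (m + 1)) : ℕ :=
  Set.ncard {q : Q | (∃ i, x i = q) ∧ InGap a g q}

/-- The characteristic `χ_v(D)`: the number of equivalence classes of points of `D` under
"same order type over `a`" all of whose members have gap-count vector `v`. -/
noncomputable def chi {Q : Type*} [LinearOrder Q] {m n : ℕ} (a : Fin m → Q)
    (v : Fin (m + 1) → ℕ) (D : Set (Fin n → Q)) : ℕ :=
  Set.ncard {C : Set (Fin n → Q) |
    ∃ x ∈ D, C = {y ∈ D | SameOrderType a x y} ∧ ∀ g, gapCount a x g = v g}

/-! ### Auxiliary gap lemmas -/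

section Gaps
variable {Q : Type*} [LinearOrder Q] {m : ℕ} {a : Fin m → Q}

lemma DLOgap.gap_lt (ha : StrictAnti a) {g : Fin (m+1)} {q : Q} (h : InGap a g q) (k : Fin m)
    (hk : (k : ℕ) < (g : ℕ)) : q < a k := by
  have hg1 : (g : ℕ) - 1 < m := by omega
  have h2 := h.2 ⟨(g:ℕ)-1, hg1⟩ (by simp; omega)
  exact h2.trans_le (ha.antitone (by simp [Fin.le_def]; omega))

lemma DLOgap.gap_gt (ha : StrictAnti a) {g : Fin (m+1)} {q : Q} (h : InGap a g q) (k : Fin m)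
    (hk : (g : ℕ) ≤ (k : ℕ)) : a k < q := by
  have hgm : (g : ℕ) < m := lt_of_le_of_lt hk k.isLt
  exact lt_of_le_of_lt (ha.antitone (by simp [Fin.le_def]; omega)) (h.1 hgm)

lemma DLOgap.gap_lt_gap (ha : StrictAnti a) {g g' : Fin (m+1)} {q q' : Q} (h : InGap a g q)
    (h' : InGap a g' q') (hgg : g < g') : q' < q := by
  have hgm : (g : ℕ) < m := lt_of_lt_of_le (Fin.lt_def.mp hgg) (Nat.lt_succ_iff.mp g'.isLt)
  exact (DLOgap.gap_lt ha h' ⟨g, hgm⟩ hgg).trans (DLOgap.gap_gt ha h ⟨g, hgm⟩ le_rfl)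

lemma DLOgap.gap_unique (ha : StrictAnti a) {g g' : Fin (m+1)} {q : Q} (h : InGap a g q)
    (h' : InGap a g' q) : g = g' := by
  rcases lt_trichotomy g g' with hl | he | hl
  · exact absurd (DLOgap.gap_lt_gap ha h h' hl) (lt_irrefl q)
  · exact he
  · exact absurd (DLOgap.gap_lt_gap ha h' h hl) (lt_irrefl q)

lemma DLOgap.not_inGap_a (ha : StrictAnti a) {g : Fin (m+1)} {k : Fin m} : ¬ InGap a g (a k) := by
  intro h
  rcases lt_or_ge (k : ℕ) (g : ℕ) with hk | hk
  · exact absurd (DLOgap.gap_lt ha h k hk) (lt_irrefl _)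
  · exact absurd (DLOgap.gap_gt ha h k hk) (lt_irrefl _)

lemma DLOgap.gap_exists (q : Q) : (∃ k, q = a k) ∨ ∃ g, InGap a g q := by
  by_cases hq : ∃ k, q = a k
  · exact Or.inl hq
  push_neg at hq
  right
  classical
  by_cases hS : ∃ k : Fin m, q < a k
  · have hne : (Finset.univ.filter (fun k => q < a k)).Nonempty := by
      obtain ⟨k, hk⟩ := hS
      exact ⟨k, by simp [hk]⟩
    obtain ⟨k₀, hk₀mem, hk₀max⟩ :
        ∃ k₀ : Fin m, q < a k₀ ∧ ∀ k : Fin m, q < a k → k ≤ k₀ := by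
      refine ⟨(Finset.univ.filter (fun k => q < a k)).max' hne, ?_, ?_⟩
      · have h := Finset.max'_mem _ hne
        exact (Finset.mem_filter.mp h).2
      · intro k hk
        exact Finset.le_max' _ k (by simp [hk])
    refine ⟨⟨(k₀ : ℕ) + 1, by omega⟩, ?_, ?_⟩
    · intro hlt
      have hnot : ¬ q < a ⟨(k₀ : ℕ) + 1, hlt⟩ := by
        intro hcon
        have hle := hk₀max _ hcon
        rw [Fin.le_def] at hle
        simp at hle
      rcases (not_lt.mp hnot).lt_or_eq with h | h
      · exact h
      · exact absurd h.symm (hq _)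
    · intro j hj
      have : j = k₀ := by
        apply Fin.ext; simp at hj ⊢; omega
      rw [this]; exact hk₀mem
  · push_neg at hS
    refine ⟨⟨0, by omega⟩, ?_, ?_⟩
    · intro hlt
      rcases (hS ⟨0, hlt⟩).lt_or_eq with h | h
      · exact h
      · exact absurd h.symm (hq _)
    · intro j hj; simp at hj

lemma DLOgap.gap_cmp {g : Fin (m+1)} {q q' : Q} (h : InGap a g q)
    (hcmp : ∀ k, (q < a k ↔ q' < a k) ∧ (a k < q ↔ a k < q')) : InGap a g q' := by
  refine ⟨fun hlt => ?_, fun j hj => ?_⟩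
  · exact (hcmp _).2.mp (h.1 hlt)
  · exact (hcmp _).1.mp (h.2 j hj)

lemma DLOgap.gap_sameSide (ha : StrictAnti a) {g : Fin (m+1)} {q q' : Q} (h : InGap a g q)
    (h' : InGap a g q') (k : Fin m) : (q < a k ↔ q' < a k) ∧ (a k < q ↔ a k < q') := by
  rcases lt_or_ge (k : ℕ) (g : ℕ) with hk | hk
  · have h1 := DLOgap.gap_lt ha h k hk
    have h2 := DLOgap.gap_lt ha h' k hk
    exact ⟨by simp [h1, h2], by simp [not_lt_of_gt h1, not_lt_of_gt h2]⟩
  · have h1 := DLOgap.gap_gt ha h k hk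
    have h2 := DLOgap.gap_gt ha h' k hk
    exact ⟨by simp [not_lt_of_gt h1, not_lt_of_gt h2], by simp [h1, h2]⟩

end Gaps

/-! ### Ranks in finite subsets of a linear order -/

noncomputable def DLOrk {Q : Type*} [LinearOrder Q] (V : Set Q) (q : Q) : ℕ :=
  Set.ncard {p ∈ V | p < q}

section Rank
variable {Q : Type*} [LinearOrder Q] {V : Set Q} {q q' : Q}

lemma DLOrk_lt_rk (hV : V.Finite) (hq : q ∈ V) (h : q < q') : DLOrk V q < DLOrk V q' := by
  apply Set.ncard_lt_ncard _ (hV.subset (Set.sep_subset _ _))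
  constructor
  · exact fun p hp => ⟨hp.1, hp.2.trans h⟩
  · intro hsub
    exact absurd ((hsub ⟨hq, h⟩).2) (lt_irrefl q)

lemma DLOrk_lt_iff (hV : V.Finite) (hq : q ∈ V) (hq' : q' ∈ V) :
    q < q' ↔ DLOrk V q < DLOrk V q' := by
  refine ⟨DLOrk_lt_rk hV hq, fun h => ?_⟩
  rcases lt_trichotomy q q' with hl | he | hl
  · exact hl
  · exact absurd h (by simp [he])
  · exact absurd h (by have := DLOrk_lt_rk hV hq' hl; omega)

lemma DLOrk_inj (hV : V.Finite) (hq : q ∈ V) (hq' : q' ∈ V) (h : DLOrk V q = DLOrk V q') :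
    q = q' := by
  rcases lt_trichotomy q q' with hl | he | hl
  · exact absurd (DLOrk_lt_rk hV hq hl) (by omega)
  · exact he
  · exact absurd (DLOrk_lt_rk hV hq' hl) (by omega)

lemma DLOrk_lt_ncard (hV : V.Finite) (hq : q ∈ V) : DLOrk V q < V.ncard := by
  apply Set.ncard_lt_ncard _ hV
  exact ⟨Set.sep_subset _ _, fun hsub => absurd (hsub hq).2 (lt_irrefl q)⟩

lemma DLOrk_surj (hV : V.Finite) {r : ℕ} (hr : r < V.ncard) : ∃ q ∈ V, DLOrk V q = r := by
  classical
  have hfin : Fintype V := hV.fintype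
  have hcard : Fintype.card V = V.ncard := by
    rw [Set.ncard_eq_toFinset_card' V, Set.toFinset_card]
  let F : V → Fin V.ncard := fun p => ⟨DLOrk V p, DLOrk_lt_ncard hV p.2⟩
  have hinj : Function.Injective F := by
    intro p p' hpp
    exact Subtype.ext (DLOrk_inj hV p.2 p'.2 (by simpa [F, Fin.ext_iff] using hpp))
  have hbij : Function.Bijective F := by
    rw [Fintype.bijective_iff_injective_and_card]
    exact ⟨hinj, by simp [hcard]⟩
  obtain ⟨p, hp⟩ := hbij.2 ⟨r, hr⟩
  exact ⟨p, p.2, by simpa [F, Fin.ext_iff] using congrArg Fin.val hp⟩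

end Rank

/-! ### The matching and the map -/

/-- The set of coordinate values of `x` in gap `g`. -/
def DLOgapSet {Q : Type*} [LinearOrder Q] {m n : ℕ} (a : Fin m → Q) (x : Fin n → Q)
    (g : Fin (m + 1)) : Set Q :=
  {q : Q | (∃ i, x i = q) ∧ InGap a g q}

lemma DLOgapSet_finite {Q : Type*} [LinearOrder Q] {m n : ℕ} (a : Fin m → Q) (x : Fin n → Q)
    (g : Fin (m + 1)) : (DLOgapSet a x g).Finite :=
  (Set.finite_range x).subset (fun q hq => hq.1.imp (fun _ h => h))

lemma DLOgapCount_eq {Q : Type*} [LinearOrder Q] {m n : ℕ} (a : Fin m → Q) (x : Fin n → Q)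
    (g : Fin (m + 1)) : gapCount a x g = (DLOgapSet a x g).ncard := rfl

/-- Matching data: `c j` tells where the `j`-th coordinate of the target pattern `y` should be
read off: either a constant (a value of `a`) or the `i`-th coordinate of the source. -/
def DLOMatch {Q : Type*} [LinearOrder Q] {m n : ℕ} (a : Fin m → Q) (x y : Fin n → Q)
    (c : Fin n → Q ⊕ Fin n) : Prop :=
  ∀ j, (∀ q, c j = Sum.inl q → y j = q ∧ ∃ k, q = a k) ∧
    (∀ i, c j = Sum.inr i → ∃ g, InGap a g (y j) ∧ InGap a g (x i) ∧
      DLOrk (DLOgapSet a x g) (x i) = DLOrk (DLOgapSet a y g) (y j))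

/-- The map built from matching data. -/
def DLOfmap {Q : Type*} {n : ℕ} (c : Fin n → Q ⊕ Fin n) (z : Fin n → Q) : Fin n → Q :=
  fun j => Sum.elim id z (c j)

lemma DLOexists_match {Q : Type*} [LinearOrder Q] {m n : ℕ} {a : Fin m → Q}
    (ha : StrictAnti a) {x y : Fin n → Q}
    (hxy : ∀ g : Fin (m + 1), gapCount a x g = gapCount a y g) :
    ∃ c, DLOMatch a x y c := by
  classical
  have hex : ∀ j : Fin n, ∃ cj : Q ⊕ Fin n,
      (∀ q, cj = Sum.inl q → y j = q ∧ ∃ k, q = a k) ∧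
      (∀ i, cj = Sum.inr i → ∃ g, InGap a g (y j) ∧ InGap a g (x i) ∧
        DLOrk (DLOgapSet a x g) (x i) = DLOrk (DLOgapSet a y g) (y j)) := by
    intro j
    rcases DLOgap.gap_exists (a := a) (y j) with ⟨k, hk⟩ | ⟨g, hg⟩
    · refine ⟨Sum.inl (y j), ?_, fun i hi => by simp at hi⟩
      intro q hq
      injection hq with h
      subst h
      exact ⟨rfl, k, hk⟩
    · have hymem : y j ∈ DLOgapSet a y g := ⟨⟨j, rfl⟩, hg⟩
      have hr : DLOrk (DLOgapSet a y g) (y j) < (DLOgapSet a x g).ncard := by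
        rw [← DLOgapCount_eq, hxy g, DLOgapCount_eq]
        exact DLOrk_lt_ncard (DLOgapSet_finite a y g) hymem
      obtain ⟨q, hqmem, hqrk⟩ := DLOrk_surj (DLOgapSet_finite a x g) hr
      obtain ⟨i, hi⟩ := hqmem.1
      refine ⟨Sum.inr i, fun q' hq' => by simp at hq', fun i' hi' => ?_⟩
      injection hi' with h
      subst h
      exact ⟨g, hg, by rw [hi]; exact hqmem.2, by rw [hi]; exact hqrk⟩
  choose c hc using hex
  exact ⟨c, hc⟩

lemma DLOmap_mem {Q : Type*} [LinearOrder Q] {m n : ℕ} {a : Fin m → Q} (ha : StrictAnti a)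
    {x y : Fin n → Q} {c : Fin n → Q ⊕ Fin n} (hc : DLOMatch a x y c)
    {z : Fin n → Q} (hz : SameOrderType a x z) : SameOrderType a y (DLOfmap c z) := by
  have key : ∀ j k, (y j < a k ↔ DLOfmap c z j < a k) ∧ (a k < y j ↔ a k < DLOfmap c z j) := by
    intro j k
    rcases hcj : c j with q | i
    · obtain ⟨hyq, -⟩ := (hc j).1 q hcj
      have hfj : DLOfmap c z j = y j := by simp [DLOfmap, hcj, hyq]
      rw [hfj]
      exact ⟨Iff.rfl, Iff.rfl⟩
    · obtain ⟨g, hgy, hgx, -⟩ := (hc j).2 i hcj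
      have h1 := DLOgap.gap_sameSide ha hgy hgx k
      have h2 := hz.2 i k
      simp only [DLOfmap, hcj, Sum.elim_inr]
      exact ⟨h1.1.trans h2.1, h1.2.trans h2.2⟩
  refine ⟨?_, fun j k => key j k⟩
  intro j j'
  rcases hcj : c j with q | i <;> rcases hcj' : c j' with q' | i'
  · obtain ⟨hyq, -⟩ := (hc j).1 q hcj
    obtain ⟨hyq', -⟩ := (hc j').1 q' hcj'
    have hfj : DLOfmap c z j = y j := by simp [DLOfmap, hcj, hyq]
    have hfj' : DLOfmap c z j' = y j' := by simp [DLOfmap, hcj', hyq']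
    rw [hfj, hfj']
  · obtain ⟨hyq, k, hqa⟩ := (hc j).1 q hcj
    have hya : y j = a k := hyq.trans hqa
    have hfj : DLOfmap c z j = a k := by simp only [DLOfmap, hcj, Sum.elim_inl, id_eq]; exact hqa
    rw [hya, hfj]
    exact (key j' k).2
  · obtain ⟨hyq', k, hqa'⟩ := (hc j').1 q' hcj'
    have hya' : y j' = a k := hyq'.trans hqa'
    have hfj' : DLOfmap c z j' = a k := by
      simp only [DLOfmap, hcj', Sum.elim_inl, id_eq]; exact hqa'
    rw [hya', hfj']
    exact (key j k).1
  · obtain ⟨g, hgy, hgx, hrk⟩ := (hc j).2 i hcj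
    obtain ⟨g', hgy', hgx', hrk'⟩ := (hc j').2 i' hcj'
    have hfj : DLOfmap c z j = z i := by simp [DLOfmap, hcj]
    have hfj' : DLOfmap c z j' = z i' := by simp [DLOfmap, hcj']
    rw [hfj, hfj']
    rcases lt_trichotomy g g' with hgg | hgg | hgg
    · have h1 : y j' < y j := DLOgap.gap_lt_gap ha hgy hgy' hgg
      have h2 : x i' < x i := DLOgap.gap_lt_gap ha hgx hgx' hgg
      exact iff_of_false (asymm h1) (asymm ((hz.1 i' i).mp h2))
    · subst hgg
      have hxm : x i ∈ DLOgapSet a x g := ⟨⟨i, rfl⟩, hgx⟩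
      have hxm' : x i' ∈ DLOgapSet a x g := ⟨⟨i', rfl⟩, hgx'⟩
      have hym : y j ∈ DLOgapSet a y g := ⟨⟨j, rfl⟩, hgy⟩
      have hym' : y j' ∈ DLOgapSet a y g := ⟨⟨j', rfl⟩, hgy'⟩
      rw [DLOrk_lt_iff (DLOgapSet_finite a y g) hym hym', ← hrk, ← hrk',
        ← DLOrk_lt_iff (DLOgapSet_finite a x g) hxm hxm', hz.1 i i']
    · have h1 : y j < y j' := DLOgap.gap_lt_gap ha hgy' hgy hgg
      have h2 : x i < x i' := DLOgap.gap_lt_gap ha hgx' hgx hgg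
      exact iff_of_true h1 ((hz.1 i i').mp h2)

lemma DLOmap_inv {Q : Type*} [LinearOrder Q] {m n : ℕ} {a : Fin m → Q} (ha : StrictAnti a)
    {x y : Fin n → Q} {c c' : Fin n → Q ⊕ Fin n} (hc : DLOMatch a x y c)
    (hc' : DLOMatch a y x c') {z : Fin n → Q} (hz : SameOrderType a x z) :
    DLOfmap c' (DLOfmap c z) = z := by
  funext i
  show Sum.elim id (DLOfmap c z) (c' i) = z i
  rcases hci : c' i with q | j
  · obtain ⟨hxq, k, hqa⟩ := (hc' i).1 q hci
    have h2 := hz.2 i k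
    have hz1 : ¬ z i < a k := by
      rw [← h2.1, hxq, hqa]; exact lt_irrefl _
    have hz2 : ¬ a k < z i := by
      rw [← h2.2, hxq, hqa]; exact lt_irrefl _
    show q = z i
    rw [hqa]
    exact le_antisymm (not_lt.mp hz1) (not_lt.mp hz2)
  · obtain ⟨g, hgx, hgy, hrk'⟩ := (hc' i).2 j hci
    show DLOfmap c z j = z i
    rcases hcj : c j with q | i2
    · obtain ⟨hyq, k, hqa⟩ := (hc j).1 q hcj
      exact absurd (by rw [hyq, hqa] at hgy; exact hgy) (DLOgap.not_inGap_a ha)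
    · obtain ⟨g2, hgy2, hgx2, hrk2⟩ := (hc j).2 i2 hcj
      have hgeq : g2 = g := DLOgap.gap_unique ha hgy2 hgy
      subst hgeq
      have hxeq : x i2 = x i :=
        DLOrk_inj (DLOgapSet_finite a x g2) ⟨⟨i2, rfl⟩, hgx2⟩ ⟨⟨i, rfl⟩, hgx⟩
          (hrk2.trans hrk')
      have h1 : ¬ z i2 < z i := by rw [← hz.1]; simp [hxeq]
      have h2 : ¬ z i < z i2 := by rw [← hz.1]; simp [hxeq]
      show Sum.elim id z (c j) = z i
      rw [hcj]
      exact le_antisymm (not_lt.mp h2) (not_lt.mp h1)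

section Definability
variable {Q : Type*} [LinearOrder Q] {A : Set Q} {N : ℕ}

instance DLOorderedStructure {Q : Type*} [LinearOrder Q] :
    Language.order.OrderedStructure Q := ⟨fun _ => Iff.rfl⟩

lemma DLOdef_lt (p q : Fin N) :
    A.Definable Language.order {v : Fin N → Q | v p < v q} := by
  rw [Set.definable_iff_exists_formula_sum]
  refine ⟨Term.lt (Term.var (Sum.inl (Sum.inr p))) (Term.var (Sum.inl (Sum.inr q))), ?_⟩
  ext v
  simp [Formula.Realize]

lemma DLOdef_lt_const (p : Fin N) {cq : Q} (hcq : cq ∈ A) :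
    A.Definable Language.order {v : Fin N → Q | v p < cq} := by
  rw [Set.definable_iff_exists_formula_sum]
  refine ⟨Term.lt (Term.var (Sum.inl (Sum.inr p))) (Term.var (Sum.inl (Sum.inl ⟨cq, hcq⟩))), ?_⟩
  ext v
  simp [Formula.Realize]

lemma DLOdef_const_lt (p : Fin N) {cq : Q} (hcq : cq ∈ A) :
    A.Definable Language.order {v : Fin N → Q | cq < v p} := by
  rw [Set.definable_iff_exists_formula_sum]
  refine ⟨Term.lt (Term.var (Sum.inl (Sum.inl ⟨cq, hcq⟩))) (Term.var (Sum.inl (Sum.inr p))), ?_⟩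
  ext v
  simp [Formula.Realize]

lemma DLOdef_eq (p q : Fin N) :
    A.Definable Language.order {v : Fin N → Q | v p = v q} := by
  rw [Set.definable_iff_exists_formula_sum]
  refine ⟨Term.equal (Term.var (Sum.inr p)) (Term.var (Sum.inr q)), ?_⟩
  ext v
  simp

lemma DLOdef_eq_const (p : Fin N) {cq : Q} (hcq : cq ∈ A) :
    A.Definable Language.order {v : Fin N → Q | v p = cq} := by
  rw [Set.definable_iff_exists_formula_sum]
  refine ⟨Term.equal (Term.var (Sum.inr p)) (Term.var (Sum.inl ⟨cq, hcq⟩)), ?_⟩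
  ext v
  simp

lemma DLOdef_iff {P : Prop} {s : Set (Fin N → Q)} (hs : A.Definable Language.order s) :
    A.Definable Language.order {v | P ↔ v ∈ s} := by
  by_cases hP : P
  · convert hs using 1; ext v; simp [hP]
  · convert hs.compl using 1; ext v; simp [hP]

lemma DLOdef_iInter {k : ℕ} {S : Fin k → Set (Fin N → Q)}
    (h : ∀ i, A.Definable Language.order (S i)) :
    A.Definable Language.order (⋂ i, S i) := by
  have h2 := Set.definable_biInter_finset h Finset.univ
  convert h2 using 1
  simp

end Definability


/-! ### Main theorem -/

/-- If `x` and `y` have the same number of distinct coordinate values in each gap determined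
by the strictly decreasing tuple `a`, then their order-type classes over `a` are in definable
bijection. -/
theorem dlo_gapCount_eq_defBij_classes {Q : Type*} [LinearOrder Q] [DenselyOrdered Q]
    [NoMinOrder Q] [NoMaxOrder Q] [Nonempty Q] {n m : ℕ} (a : Fin m → Q)
    (ha : StrictAnti a) (x y : Fin n → Q)
    (hxy : ∀ g : Fin (m + 1), gapCount a x g = gapCount a y g) :
    DefBij {z : Fin n → Q | SameOrderType a x z} {z : Fin n → Q | SameOrderType a y z} := by
  classical
  obtain ⟨c, hc⟩ := DLOexists_match ha hxy
  obtain ⟨c', hc'⟩ := DLOexists_match ha (fun g => (hxy g).symm)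
  refine ⟨DLOfmap c, ?_, ?_⟩
  · exact Set.InvOn.bijOn
      ⟨fun z hz => DLOmap_inv ha hc hc' hz, fun w hw => DLOmap_inv ha hc' hc hw⟩
      (fun z hz => DLOmap_mem ha hc hz) (fun w hw => DLOmap_mem ha hc' hw)
  · refine ⟨Set.range a, Set.finite_range a, ?_⟩
    have hmem : ∀ k, a k ∈ Set.range a := fun k => ⟨k, rfl⟩
    have hgraph : graphOn {z : Fin n → Q | SameOrderType a x z} (DLOfmap c) =
        ((⋂ i, ⋂ i', {v : Fin (n + n) → Q |
            x i < x i' ↔ v (Fin.castAdd n i) < v (Fin.castAdd n i')}) ∩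
          ⋂ i, ⋂ k, ({v : Fin (n + n) → Q | x i < a k ↔ v (Fin.castAdd n i) < a k} ∩
            {v : Fin (n + n) → Q | a k < x i ↔ a k < v (Fin.castAdd n i)})) ∩
        ⋂ j, Sum.elim
          (fun q => {v : Fin (n + n) → Q | v (Fin.natAdd n j) = q})
          (fun i => {v : Fin (n + n) → Q | v (Fin.natAdd n j) = v (Fin.castAdd n i)}) (c j) := by
      ext v
      constructor
      · rintro ⟨z, hz, rfl⟩
        have hleft : ∀ i, Fin.append z (DLOfmap c z) (Fin.castAdd n i) = z i :=
          fun i => Fin.append_left _ _ i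
        have hright : ∀ j, Fin.append z (DLOfmap c z) (Fin.natAdd n j) = DLOfmap c z j :=
          fun j => Fin.append_right _ _ j
        refine ⟨⟨?_, ?_⟩, ?_⟩
        · simp only [Set.mem_iInter, Set.mem_setOf_eq, hleft]
          exact fun i i' => hz.1 i i'
        · simp only [Set.mem_iInter, Set.mem_inter_iff, Set.mem_setOf_eq, hleft]
          exact fun i k => hz.2 i k
        · simp only [Set.mem_iInter]
          intro j
          rcases hcj : c j with q | i
          · simp only [hcj, Sum.elim_inl, Set.mem_setOf_eq, hright]
            simp [DLOfmap, hcj]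
          · simp only [hcj, Sum.elim_inr, Set.mem_setOf_eq, hright, hleft]
            simp [DLOfmap, hcj]
      · rintro ⟨⟨h1, h2⟩, h3⟩
        simp only [Set.mem_iInter, Set.mem_inter_iff, Set.mem_setOf_eq] at h1 h2
        simp only [Set.mem_iInter] at h3
        refine ⟨fun i => v (Fin.castAdd n i), ⟨fun i i' => h1 i i', fun i k => h2 i k⟩, ?_⟩
        funext p
        refine Fin.addCases (fun i => ?_) (fun j => ?_) p
        · rw [Fin.append_left]
        · rw [Fin.append_right]
          have h3j := h3 j
          rcases hcj : c j with q | i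
          · rw [hcj] at h3j
            simp only [Sum.elim_inl, Set.mem_setOf_eq] at h3j
            simp only [DLOfmap, hcj, Sum.elim_inl, id_eq]
            exact h3j
          · rw [hcj] at h3j
            simp only [Sum.elim_inr, Set.mem_setOf_eq] at h3j
            simp only [DLOfmap, hcj, Sum.elim_inr]
            exact h3j
    rw [hgraph]
    refine Set.Definable.inter (Set.Definable.inter ?_ ?_) ?_
    · exact DLOdef_iInter fun i => DLOdef_iInter fun i' => DLOdef_iff (DLOdef_lt _ _)
    · exact DLOdef_iInter fun i => DLOdef_iInter fun k =>
        Set.Definable.inter (DLOdef_iff (DLOdef_lt_const _ (hmem k)))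
          (DLOdef_iff (DLOdef_const_lt _ (hmem k)))
    · refine DLOdef_iInter fun j => ?_
      rcases hcj : c j with q | i
      · obtain ⟨-, k, hqa⟩ := (hc j).1 q hcj
        exact DLOdef_eq_const _ (hqa ▸ hmem k)
      · exact DLOdef_eq _ _
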